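/- Let E be a finite collection of measurable sets with finite positive measure, μ a positive measure, and suppose that E admits functions as produced by the general greedy algorithm: there is a total order ≺ on E, a constant A ≥ 1 with Λ_μ(E_{⪰R}) ≤ A for all R, and functions f_R = (1_R/h_{E_{⪰R}})·1_{{h_{E_{⪰R}} ≤ 2Λ_μ(E_{⪰R})}} with ∫ f_R dμ ≥ μ(R)/(2Λ_μ(E_{⪰R})). Then pointwise ∑_{R∈E} f_R(x) ≤ C log(e + A) for an absolute constant C, and consequently ‖E‖_{Carleson(μ)} ≤ C' A log(e + A). -/

import Mathlib

open MeasureTheory Set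
open scoped ENNReal

lemma stmt15_harm (n : ℕ) (A : ℝ) (hA : 1 ≤ A) (hn : (n : ℝ) ≤ 2 * A) :
    ∑ d ∈ Finset.Icc 1 n, (d : ℝ)⁻¹ ≤ 3 * Real.log (Real.exp 1 + A) := by
  have h1 : ∑ d ∈ Finset.Icc 1 n, (d : ℝ)⁻¹ = (harmonic n : ℝ) := by
    rw [harmonic_eq_sum_Icc]; push_cast; ring
  have hL : 1 ≤ Real.log (Real.exp 1 + A) := by
    rw [Real.le_log_iff_exp_le (by positivity)]; linarith
  have hlogn : Real.log n ≤ Real.log 2 + Real.log (Real.exp 1 + A) := by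
    rcases Nat.eq_zero_or_pos n with h0 | h0
    · have h2 : (0:ℝ) < Real.log 2 := Real.log_pos (by norm_num)
      simp only [h0, Nat.cast_zero, Real.log_zero]
      linarith
    · have hn0 : (0:ℝ) < n := by exact_mod_cast h0
      calc Real.log n ≤ Real.log (2 * A) := Real.log_le_log hn0 hn
        _ = Real.log 2 + Real.log A := Real.log_mul two_ne_zero (by linarith)
        _ ≤ Real.log 2 + Real.log (Real.exp 1 + A) := by
            have := Real.exp_pos 1
            have := Real.log_le_log (by linarith : (0:ℝ) < A) (by linarith : A ≤ Real.exp 1 + A)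
            linarith
  have hlog2 : Real.log 2 ≤ 1 := by
    have := Real.log_le_sub_one_of_pos (by norm_num : (0:ℝ) < 2); linarith
  have := harmonic_le_one_add_log n
  rw [h1]; linarith

lemma stmt15_ptwise {X : Type} {ι : Type} [LinearOrder ι] (s : Finset ι) (E : ι → Set X)
    (A : ℝ) (hA : 1 ≤ A) (Λi : ι → ℝ≥0∞)
    (hΛ : ∀ i ∈ s, Λi i ≤ ENNReal.ofReal A) (x : X) :
    ∑ i ∈ s,
      ({y | (∑ j ∈ s.filter (fun j => i ≤ j), (E j).indicator (1 : X → ℝ≥0∞) y) ≤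
          2 * Λi i}).indicator
        (fun y => (E i).indicator (1 : X → ℝ≥0∞) y /
          ∑ j ∈ s.filter (fun j => i ≤ j), (E j).indicator (1 : X → ℝ≥0∞) y) x
      ≤ ENNReal.ofReal (3 * Real.log (Real.exp 1 + A)) := by
  classical
  set T := s.filter (fun i => x ∈ E i) with hT
  set c : ι → ℕ := fun i => (T.filter (fun j => i ≤ j)).card with hc
  have h_eq : ∀ i : ι,
      (∑ j ∈ s.filter (fun j => i ≤ j), (E j).indicator (1 : X → ℝ≥0∞) x) = (c i : ℝ≥0∞) := by
    intro i
    simp only [Set.indicator_apply, Pi.one_apply]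
    rw [Finset.sum_boole]
    congr 2
    ext j
    simp only [Finset.mem_filter, hT]
    tauto
  have h2A : 2 * ENNReal.ofReal A = ENNReal.ofReal (2 * A) := by
    rw [ENNReal.ofReal_mul (by norm_num : (0:ℝ) ≤ 2), ENNReal.ofReal_ofNat]
  set n₀ : ℕ := ⌊2 * A⌋₊ with hn₀
  have step1 : ∑ i ∈ s,
      ({y | (∑ j ∈ s.filter (fun j => i ≤ j), (E j).indicator (1 : X → ℝ≥0∞) y) ≤
          2 * Λi i}).indicator
        (fun y => (E i).indicator (1 : X → ℝ≥0∞) y /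
          ∑ j ∈ s.filter (fun j => i ≤ j), (E j).indicator (1 : X → ℝ≥0∞) y) x
      ≤ ∑ i ∈ s, (if x ∈ E i ∧ (c i : ℝ≥0∞) ≤ 2 * ENNReal.ofReal A
          then ((c i : ℝ≥0∞))⁻¹ else 0) := by
    apply Finset.sum_le_sum
    intro i hi
    by_cases hx : x ∈ {y | (∑ j ∈ s.filter (fun j => i ≤ j),
        (E j).indicator (1 : X → ℝ≥0∞) y) ≤ 2 * Λi i}
    · rw [Set.indicator_of_mem hx]
      by_cases hxe : x ∈ E i
      · have hx' : (c i : ℝ≥0∞) ≤ 2 * Λi i := by rw [← h_eq i]; exact hx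
        have hcond : (c i : ℝ≥0∞) ≤ 2 * ENNReal.ofReal A :=
          hx'.trans (mul_le_mul_right (hΛ i hi) 2)
        rw [if_pos ⟨hxe, hcond⟩, h_eq i, Set.indicator_of_mem hxe, Pi.one_apply, one_div]
      · simp [Set.indicator_of_notMem hxe]
    · rw [Set.indicator_of_notMem hx]
      exact zero_le
  set T' := T.filter (fun i => (c i : ℝ≥0∞) ≤ 2 * ENNReal.ofReal A) with hT'
  have step2 : ∑ i ∈ s, (if x ∈ E i ∧ (c i : ℝ≥0∞) ≤ 2 * ENNReal.ofReal A
      then ((c i : ℝ≥0∞))⁻¹ else 0) = ∑ i ∈ T', ((c i : ℝ≥0∞))⁻¹ := by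
    rw [Finset.sum_ite, Finset.sum_const_zero, add_zero]
    congr 1
    ext j
    simp only [Finset.mem_filter, hT', hT]
    tauto
  have hinj : ∀ i ∈ T', ∀ j ∈ T', c i = c j → i = j := by
    have key : ∀ i ∈ T, ∀ j ∈ T, i < j → c j < c i := by
      intro i hiT j hjT hij
      apply Finset.card_lt_card
      constructor
      · intro k hk
        rw [Finset.mem_filter] at hk ⊢
        exact ⟨hk.1, le_trans hij.le hk.2⟩
      · intro hsub
        have : i ∈ T.filter (fun k => j ≤ k) := hsub (by
          rw [Finset.mem_filter]; exact ⟨hiT, le_refl i⟩)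
        rw [Finset.mem_filter] at this
        exact absurd this.2 (not_le.mpr hij)
    intro i hi j hj hcij
    have hiT : i ∈ T := Finset.mem_of_mem_filter i hi
    have hjT : j ∈ T := Finset.mem_of_mem_filter j hj
    rcases lt_trichotomy i j with h | h | h
    · exact absurd hcij (key i hiT j hjT h).ne'
    · exact h
    · exact absurd hcij (key j hjT i hiT h).ne
  have step3 : ∑ i ∈ T', ((c i : ℝ≥0∞))⁻¹ = ∑ n ∈ T'.image c, ((n : ℝ≥0∞))⁻¹ :=
    (Finset.sum_image (f := fun n : ℕ => ((n : ℝ≥0∞))⁻¹) hinj).symm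
  have hsubset : T'.image c ⊆ Finset.Icc 1 n₀ := by
    intro n hn
    rw [Finset.mem_image] at hn
    obtain ⟨i, hi, rfl⟩ := hn
    rw [Finset.mem_filter] at hi
    rw [Finset.mem_Icc]
    constructor
    · rw [Nat.one_le_iff_ne_zero, ← Nat.pos_iff_ne_zero, hc, Finset.card_pos]
      exact ⟨i, by rw [Finset.mem_filter]; exact ⟨hi.1, le_refl i⟩⟩
    · have := hi.2
      rw [h2A, ← ENNReal.ofReal_natCast,
        ENNReal.ofReal_le_ofReal_iff (by linarith)] at this
      exact Nat.le_floor this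
  have step4 : ∑ n ∈ T'.image c, ((n : ℝ≥0∞))⁻¹ ≤ ∑ n ∈ Finset.Icc 1 n₀, ((n : ℝ≥0∞))⁻¹ :=
    Finset.sum_le_sum_of_subset hsubset
  have step5 : ∑ n ∈ Finset.Icc 1 n₀, ((n : ℝ≥0∞))⁻¹
      ≤ ENNReal.ofReal (3 * Real.log (Real.exp 1 + A)) := by
    have hterm : ∀ n ∈ Finset.Icc 1 n₀, ((n : ℝ≥0∞))⁻¹ = ENNReal.ofReal ((n : ℝ))⁻¹ := by
      intro n hn
      rw [Finset.mem_Icc] at hn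
      have hn0 : (0:ℝ) < n := by exact_mod_cast hn.1
      rw [ENNReal.ofReal_inv_of_pos hn0, ENNReal.ofReal_natCast]
    rw [Finset.sum_congr rfl hterm, ← ENNReal.ofReal_sum_of_nonneg
      (fun n _ => by positivity)]
    exact ENNReal.ofReal_le_ofReal (stmt15_harm n₀ A hA (Nat.floor_le (by linarith)))
  calc _ ≤ _ := step1
    _ = _ := step2
    _ = _ := step3
    _ ≤ _ := step4
    _ ≤ _ := step5

theorem stmt15 :
    ∃ C C' : ℝ, 0 < C ∧ 0 < C' ∧
      ∀ {X : Type} [MeasurableSpace X] (μ : Measure X)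
        {ι : Type} [LinearOrder ι] (s : Finset ι) (E : ι → Set X),
        (∀ i ∈ s, MeasurableSet (E i)) →
        (∀ i ∈ s, 0 < μ (E i)) → (∀ i ∈ s, μ (E i) < ⊤) →
        ∀ A : ℝ, 1 ≤ A →
        -- Λi i is the average height Λ_μ(E_{⪰i}) of the tail collection
        let Λi : ι → ℝ≥0∞ := fun i =>
          (∑ j ∈ s.filter (fun j => i ≤ j), μ (E j)) /
            μ (⋃ j ∈ s.filter (fun j => i ≤ j), E j)
        -- f i is the function f_R produced by the greedy algorithm
        let f : ι → X → ℝ≥0∞ := fun i =>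
          ({y | (∑ j ∈ s.filter (fun j => i ≤ j), (E j).indicator (1 : X → ℝ≥0∞) y) ≤
              2 * Λi i}).indicator
            (fun y => (E i).indicator (1 : X → ℝ≥0∞) y /
              ∑ j ∈ s.filter (fun j => i ≤ j), (E j).indicator (1 : X → ℝ≥0∞) y)
        (∀ i ∈ s, Λi i ≤ ENNReal.ofReal A) →
        (∀ i ∈ s, μ (E i) / (2 * Λi i) ≤ ∫⁻ x, f i x ∂μ) →
        (∀ x, ∑ i ∈ s, f i x ≤ ENNReal.ofReal (C * Real.log (Real.exp 1 + A))) ∧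
        (∀ F ⊆ s, ∑ i ∈ F, μ (E i) ≤
          ENNReal.ofReal (C' * A * Real.log (Real.exp 1 + A)) * μ (⋃ i ∈ F, E i)) := by
  refine ⟨3, 6, by norm_num, by norm_num, ?_⟩
  intro X _ μ ι _ s E hmeas hpos hfin A hA Λi f hΛ hint
  classical
  have key : ∀ x, ∑ i ∈ s, f i x ≤ ENNReal.ofReal (3 * Real.log (Real.exp 1 + A)) :=
    fun x => stmt15_ptwise s E A hA Λi hΛ x
  refine ⟨key, ?_⟩
  intro F hF
  -- measurability
  have hH : ∀ i : ι, Measurable (fun y =>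
      ∑ j ∈ s.filter (fun j => i ≤ j), (E j).indicator (1 : X → ℝ≥0∞) y) := fun i =>
    Finset.measurable_sum _ fun j hj =>
      measurable_one.indicator (hmeas j (Finset.mem_of_mem_filter j hj))
  have hfm : ∀ i ∈ s, Measurable (f i) := by
    intro i hi
    exact Measurable.indicator
      (Measurable.div (measurable_one.indicator (hmeas i hi)) (hH i))
      (measurableSet_le (hH i) measurable_const)
  -- f i vanishes outside E i
  have hf0 : ∀ i, ∀ x, x ∉ E i → f i x = 0 := by
    intro i x hx
    show Set.indicator _ _ x = 0
    by_cases hxS : x ∈ {y | (∑ j ∈ s.filter (fun j => i ≤ j),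
        (E j).indicator (1 : X → ℝ≥0∞) y) ≤ 2 * Λi i}
    · rw [Set.indicator_of_mem hxS, Set.indicator_of_notMem hx, ENNReal.zero_div]
    · exact Set.indicator_of_notMem hxS _
  -- step: μ(E i) ≤ 2 ofReal A * ∫ f i
  have h1 : ∀ i ∈ F, μ (E i) ≤ (2 * ENNReal.ofReal A) * ∫⁻ x, f i x ∂μ := by
    intro i hi
    have hi' := hF hi
    have hnum : (0 : ℝ≥0∞) < ∑ j ∈ s.filter (fun j => i ≤ j), μ (E j) :=
      lt_of_lt_of_le (hpos i hi') (Finset.single_le_sum (f := fun j => μ (E j)) (fun j _ => zero_le)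
        (by rw [Finset.mem_filter]; exact ⟨hi', le_refl i⟩))
    have hden : μ (⋃ j ∈ s.filter (fun j => i ≤ j), E j) ≠ ⊤ := by
      refine (lt_of_le_of_lt (measure_biUnion_finset_le _ _) ?_).ne
      exact ENNReal.sum_lt_top.2 fun j hj => hfin j (Finset.mem_of_mem_filter j hj)
    have hΛpos : Λi i ≠ 0 := (ENNReal.div_pos hnum.ne' hden).ne'
    have hΛfin : Λi i ≠ ⊤ := (lt_of_le_of_lt (hΛ i hi') ENNReal.ofReal_lt_top).ne
    have h0 : (2 : ℝ≥0∞) * Λi i ≠ 0 := by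
      simp [hΛpos]
    have ht : (2 : ℝ≥0∞) * Λi i ≠ ⊤ := by
      exact ENNReal.mul_ne_top (by norm_num) hΛfin
    have := (ENNReal.div_le_iff h0 ht).1 (hint i hi')
    calc μ (E i) ≤ (∫⁻ x, f i x ∂μ) * (2 * Λi i) := this
      _ ≤ (∫⁻ x, f i x ∂μ) * (2 * ENNReal.ofReal A) :=
          mul_le_mul_right (mul_le_mul_right (hΛ i hi') 2) _
      _ = (2 * ENNReal.ofReal A) * ∫⁻ x, f i x ∂μ := mul_comm _ _
  have hU : MeasurableSet (⋃ i ∈ F, E i) :=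
    Finset.measurableSet_biUnion F fun i hi => hmeas i (hF hi)
  calc ∑ i ∈ F, μ (E i)
      ≤ ∑ i ∈ F, (2 * ENNReal.ofReal A) * ∫⁻ x, f i x ∂μ := Finset.sum_le_sum h1
    _ = (2 * ENNReal.ofReal A) * ∑ i ∈ F, ∫⁻ x, f i x ∂μ := (Finset.mul_sum _ _ _).symm
    _ = (2 * ENNReal.ofReal A) * ∫⁻ x, ∑ i ∈ F, f i x ∂μ := by
        rw [lintegral_finset_sum F (fun i hi => hfm i (hF hi))]
    _ ≤ (2 * ENNReal.ofReal A) * ∫⁻ x, (⋃ i ∈ F, E i).indicator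
          (fun _ => ENNReal.ofReal (3 * Real.log (Real.exp 1 + A))) x ∂μ := by
        refine mul_le_mul_right (lintegral_mono fun x => ?_) _
        by_cases hx : x ∈ ⋃ i ∈ F, E i
        · rw [Set.indicator_of_mem hx]
          exact le_trans (Finset.sum_le_sum_of_subset hF) (key x)
        · rw [Set.indicator_of_notMem hx, Finset.sum_eq_zero]
          intro i hi
          refine hf0 i x fun hxi => hx ?_
          exact Set.mem_biUnion hi hxi
    _ = (2 * ENNReal.ofReal A) * (ENNReal.ofReal (3 * Real.log (Real.exp 1 + A)) *
          μ (⋃ i ∈ F, E i)) := by rw [lintegral_indicator_const hU]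
    _ = ENNReal.ofReal (6 * A * Real.log (Real.exp 1 + A)) * μ (⋃ i ∈ F, E i) := by
        rw [← mul_assoc]
        congr 1
        rw [← ENNReal.ofReal_ofNat 2, ← ENNReal.ofReal_mul (by norm_num),
          ← ENNReal.ofReal_mul (mul_nonneg (by norm_num) (by linarith : (0:ℝ) ≤ A))]
        ring_nf
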